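/- Converse direction of the folk theorem (Proposition 1): Let G be a finite Bayesian game and G(D) a commitment game over G that has non-commitment devices. If a strategy profile σ is a Bayesian Nash equilibrium of G(D), then the induced interim expected payoff vector X^σ = (X^σ_j)_j is feasible and interim individually rational (INTIR). -/

import Mathlib

open MeasureTheory

noncomputable section

/-- Assemble a dependent profile from the `j`-component `xj` and the components `xm` of the
players other than `j`. -/
def combine {n : ℕ} {X : Fin n → Type} (j : Fin n) (xj : X j)
    (xm : ∀ i : {i : Fin n // i ≠ j}, X i.1) (i : Fin n) : X i :=
  if h : i = j then cast (congrArg X h).symm xj else xm ⟨i, h⟩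

/-- Conditional probability `q(t₋ⱼ | tⱼ)` of the other players' types given one's own type,
derived from the common prior `q`. -/
def condQ {n : ℕ} {T : Fin n → Type} [∀ i, Fintype (T i)]
    (q : (∀ i, T i) → ℝ) (j : Fin n) (tj : T j)
    (tm : ∀ i : {i : Fin n // i ≠ j}, T i.1) : ℝ :=
  q (combine j tj tm) /
    ∑ s : ∀ i : {i : Fin n // i ≠ j}, T i.1, q (combine j tj s)

/-- The action played in the base game by player `i` in the commitment game, given the
submitted device profile `d`, the true type profile `t`, and the realized signal `c`:
player `i`'s response function is applied to the others' devices, the disclosed types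
(player `j ≠ i` disclosing `t j` exactly when the `i`-entry of `j`'s disclosure vector is 1),
and the signal. -/
def play {n : ℕ} {T A D : Fin n → Type} {C : Type}
    (r : ∀ i : Fin n, D i → T i → (∀ j : {j : Fin n // j ≠ i}, D j.1) →
      (∀ j : {j : Fin n // j ≠ i}, Option (T j.1)) → C → A i)
    (y : ∀ i : Fin n, D i → T i → (∀ j : {j : Fin n // j ≠ i}, D j.1) →
      {j : Fin n // j ≠ i} → Bool)
    (d : ∀ i, D i) (t : ∀ i, T i) (c : C) (i : Fin n) : A i :=
  r i (d i) (t i) (fun j => d j.1)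
    (fun j =>
      if y j.1 (d j.1) (t j.1) (fun k => d k.1) ⟨i, Ne.symm j.2⟩ then some (t j.1)
      else none) c

/-- The interim expected payoff `Xᵠ_j(t_j)` of player `j` of type `tj` in the commitment game
under the strategy profile `σ`. -/
def interim {n : ℕ} {T A D : Fin n → Type} {C : Type} [MeasurableSpace C]
    [∀ i, Fintype (T i)]
    (q : (∀ i, T i) → ℝ) (u : ∀ _i : Fin n, (∀ i, T i) → (∀ i, A i) → ℝ)
    (r : ∀ i : Fin n, D i → T i → (∀ j : {j : Fin n // j ≠ i}, D j.1) →
      (∀ j : {j : Fin n // j ≠ i}, Option (T j.1)) → C → A i)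
    (y : ∀ i : Fin n, D i → T i → (∀ j : {j : Fin n // j ≠ i}, D j.1) →
      {j : Fin n // j ≠ i} → Bool)
    (ν : Measure C) (σ : ∀ i, T i → D i) (j : Fin n) (tj : T j) : ℝ :=
  ∑ tm : ∀ i : {i : Fin n // i ≠ j}, T i.1,
    condQ q j tj tm *
      ∫ c, u j (combine j tj tm)
        (play r y (fun i => σ i (combine j tj tm i)) (combine j tj tm) c) ∂ν

/-- A strategy profile `σ` is a Bayesian Nash equilibrium of the commitment game if no player
of any type can strictly increase their interim expected payoff by submitting a different
device. -/
def isBNE {n : ℕ} {T A D : Fin n → Type} {C : Type} [MeasurableSpace C]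
    [∀ i, Fintype (T i)]
    (q : (∀ i, T i) → ℝ) (u : ∀ _i : Fin n, (∀ i, T i) → (∀ i, A i) → ℝ)
    (r : ∀ i : Fin n, D i → T i → (∀ j : {j : Fin n // j ≠ i}, D j.1) →
      (∀ j : {j : Fin n // j ≠ i}, Option (T j.1)) → C → A i)
    (y : ∀ i : Fin n, D i → T i → (∀ j : {j : Fin n // j ≠ i}, D j.1) →
      {j : Fin n // j ≠ i} → Bool)
    (ν : Measure C) (σ : ∀ i, T i → D i) : Prop :=
  ∀ (j : Fin n) (tj : T j) (d' : D j),
    interim q u r y ν (Function.update σ j fun _ => d') j tj ≤ interim q u r y ν σ j tj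

/-- A payoff vector `x` is feasible if it is induced by some correlated policy `μ`. -/
def Feasible {n : ℕ} {T A : Fin n → Type} [∀ i, Fintype (T i)] [∀ i, Fintype (A i)]
    (q : (∀ i, T i) → ℝ) (u : ∀ _i : Fin n, (∀ i, T i) → (∀ i, A i) → ℝ)
    (x : ∀ j : Fin n, T j → ℝ) : Prop :=
  ∃ μ : (∀ i, T i) → (∀ i, A i) → ℝ,
    (∀ t a, 0 ≤ μ t a) ∧ (∀ t, ∑ a : ∀ i, A i, μ t a = 1) ∧
    ∀ (j : Fin n) (tj : T j),
      x j tj = ∑ tm : ∀ i : {i : Fin n // i ≠ j}, T i.1,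
        condQ q j tj tm *
          ∑ a : ∀ i, A i, μ (combine j tj tm) a * u j (combine j tj tm) a

/-- A payoff vector `x` is interim individually rational (INTIR) if each player `j` can be
held down to at most `x j` by a correlated policy `τ` of the other players depending only on
their own types. -/
def INTIR {n : ℕ} {T A : Fin n → Type} [∀ i, Fintype (T i)] [∀ i, Fintype (A i)]
    (q : (∀ i, T i) → ℝ) (u : ∀ _i : Fin n, (∀ i, T i) → (∀ i, A i) → ℝ)
    (x : ∀ j : Fin n, T j → ℝ) : Prop :=
  ∀ j : Fin n,
    ∃ τ : (∀ k : {k : Fin n // k ≠ j}, T k.1) → (∀ k : {k : Fin n // k ≠ j}, A k.1) → ℝ,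
      (∀ tm b, 0 ≤ τ tm b) ∧
      (∀ tm, ∑ b : ∀ k : {k : Fin n // k ≠ j}, A k.1, τ tm b = 1) ∧
      ∀ (tj : T j) (aj : A j),
        ∑ tm : ∀ k : {k : Fin n // k ≠ j}, T k.1,
          condQ q j tj tm *
            ∑ b : ∀ k : {k : Fin n // k ≠ j}, A k.1,
              τ tm b * u j (combine j tj tm) (combine j aj b) ≤ x j tj


lemma combine_same {n : ℕ} {X : Fin n → Type} (j : Fin n) (xj : X j)
    (xm : ∀ i : {i : Fin n // i ≠ j}, X i.1) : combine j xj xm j = xj := by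
  simp [combine]

lemma combine_ne {n : ℕ} {X : Fin n → Type} (j : Fin n) (xj : X j)
    (xm : ∀ i : {i : Fin n // i ≠ j}, X i.1) {i : Fin n} (h : i ≠ j) :
    combine j xj xm i = xm ⟨i, h⟩ := by
  simp [combine, h]

lemma sum_toReal_measure_fiber {C B : Type} [MeasurableSpace C] [Fintype B]
    (ν : Measure C) [IsProbabilityMeasure ν] (f : C → B)
    (hf : ∀ b, MeasurableSet {c | f c = b}) :
    ∑ b, (ν {c | f c = b}).toReal = 1 := by
  have hdisj : Pairwise (Function.onFun Disjoint fun b => {c | f c = b}) := by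
    intro b b' hbb'
    simp only [Function.onFun, Set.disjoint_left]
    rintro c (rfl : f c = b) (h : f c = b')
    exact hbb' h
  have hun : (⋃ b, {c | f c = b}) = Set.univ := by
    ext c; simp
  have hm := measure_iUnion (μ := ν) hdisj hf
  rw [hun, measure_univ, tsum_fintype] at hm
  rw [← ENNReal.toReal_sum (fun b _ => measure_ne_top ν _), ← hm, ENNReal.toReal_one]

lemma integral_comp_fiber {C B : Type} [MeasurableSpace C] [Fintype B]
    (ν : Measure C) [IsFiniteMeasure ν] (f : C → B)
    (hf : ∀ b, MeasurableSet {c | f c = b}) (g : B → ℝ) :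
    ∫ c, g (f c) ∂ν = ∑ b, (ν {c | f c = b}).toReal * g b := by
  classical
  have h1 : ∀ c, g (f c) = ∑ b, Set.indicator {c | f c = b} (fun _ => g b) c := by
    intro c
    rw [Finset.sum_eq_single (f c)]
    · simp [Set.indicator]
    · intro b _ hb
      exact Set.indicator_of_notMem (fun h => hb (Set.mem_setOf.mp h).symm) _
    · simp
  simp_rw [h1]
  rw [integral_finset_sum]
  · refine Finset.sum_congr rfl fun b _ => ?_
    rw [integral_indicator_const _ (hf b)]
    simp [mul_comm, Measure.real]
  · intro b _
    exact (integrable_const (g b)).indicator (hf b)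

/-- Proposition 1: in a commitment game with non-commitment devices
(witnessed by `κ`), the interim expected payoff vector of any Bayesian Nash equilibrium `σ`
is feasible and interim individually rational. -/
theorem equilibrium_payoffs_feasible_and_INTIR
    {n : ℕ} {T A D : Fin n → Type} {C : Type} [MeasurableSpace C]
    [∀ i, Fintype (T i)] [∀ i, Nonempty (T i)]
    [∀ i, Fintype (A i)] [∀ i, Nonempty (A i)] [∀ i, Nonempty (D i)]
    (q : (∀ i, T i) → ℝ) (hqpos : ∀ t, 0 < q t) (hqsum : ∑ t, q t = 1)
    (u : ∀ _i : Fin n, (∀ i, T i) → (∀ i, A i) → ℝ)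
    (r : ∀ i : Fin n, D i → T i → (∀ j : {j : Fin n // j ≠ i}, D j.1) →
      (∀ j : {j : Fin n // j ≠ i}, Option (T j.1)) → C → A i)
    (y : ∀ i : Fin n, D i → T i → (∀ j : {j : Fin n // j ≠ i}, D j.1) →
      {j : Fin n // j ≠ i} → Bool)
    (ν : Measure C) [IsProbabilityMeasure ν]
    (hrmeas : ∀ (i : Fin n) (di : D i) (ti : T i)
      (dm : ∀ j : {j : Fin n // j ≠ i}, D j.1)
      (θ : ∀ j : {j : Fin n // j ≠ i}, Option (T j.1)) (a : A i),
      MeasurableSet {c | r i di ti dm θ c = a})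
    -- non-commitment devices
    (κ : ∀ j : Fin n, A j → D j)
    (hκr : ∀ (j : Fin n) (a : A j) (tj : T j) (dm : ∀ k : {k : Fin n // k ≠ j}, D k.1)
      (θ : ∀ k : {k : Fin n // k ≠ j}, Option (T k.1)) (c : C),
      r j (κ j a) tj dm θ c = a)
    (hκy : ∀ (j : Fin n) (a : A j) (tj : T j) (dm : ∀ k : {k : Fin n // k ≠ j}, D k.1)
      (k : {k : Fin n // k ≠ j}), y j (κ j a) tj dm k = false)
    -- other players cannot distinguish among player `j`'s non-commitment devices
    (hκindist_r : ∀ (j : Fin n) (a a' : A j) (k : Fin n) (hjk : j ≠ k) (e : D k) (tk : T k)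
      (dm : ∀ l : {l : Fin n // l ≠ k}, D l.1)
      (θ : ∀ l : {l : Fin n // l ≠ k}, Option (T l.1)) (c : C),
      r k e tk (Function.update dm ⟨j, hjk⟩ (κ j a)) θ c =
        r k e tk (Function.update dm ⟨j, hjk⟩ (κ j a')) θ c)
    (hκindist_y : ∀ (j : Fin n) (a a' : A j) (k : Fin n) (hjk : j ≠ k) (e : D k) (tk : T k)
      (dm : ∀ l : {l : Fin n // l ≠ k}, D l.1) (l : {l : Fin n // l ≠ k}),
      y k e tk (Function.update dm ⟨j, hjk⟩ (κ j a)) l =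
        y k e tk (Function.update dm ⟨j, hjk⟩ (κ j a')) l)
    -- `σ` is a Bayesian Nash equilibrium of the commitment game
    (σ : ∀ i, T i → D i) (hσ : isBNE q u r y ν σ) :
    Feasible q u (fun j tj => interim q u r y ν σ j tj) ∧
      INTIR q u (fun j tj => interim q u r y ν σ j tj) := by
  classical
  have hpm : ∀ (d : ∀ i, D i) (t : ∀ i, T i) (i : Fin n) (ai : A i),
      MeasurableSet {c | play r y d t c i = ai} := by
    intro d t i ai
    simp only [play]
    exact hrmeas i (d i) (t i) _ _ ai
  have hfib : ∀ (d : ∀ i, D i) (t : ∀ i, T i) (a : ∀ i, A i),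
      MeasurableSet {c | play r y d t c = a} := by
    intro d t a
    have he : {c | play r y d t c = a} = ⋂ i, {c | play r y d t c i = a i} := by
      ext c; simp [funext_iff]
    rw [he]
    exact MeasurableSet.iInter fun i => hpm d t i (a i)
  have hfib2 : ∀ (j : Fin n) (d : ∀ i, D i) (t : ∀ i, T i)
      (b : ∀ k : {k : Fin n // k ≠ j}, A k.1),
      MeasurableSet {c | (fun k : {k : Fin n // k ≠ j} => play r y d t c k.1) = b} := by
    intro j d t b
    have he : {c | (fun k : {k : Fin n // k ≠ j} => play r y d t c k.1) = b}
        = ⋂ k : {k : Fin n // k ≠ j}, {c | play r y d t c k.1 = b k} := by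
      ext c; simp [funext_iff]
    rw [he]
    exact MeasurableSet.iInter fun k => hpm d t k.1 (b k)
  constructor
  · -- Feasibility
    refine ⟨fun t a => (ν {c | play r y (fun i => σ i (t i)) t c = a}).toReal,
      fun t a => ENNReal.toReal_nonneg,
      fun t => sum_toReal_measure_fiber ν _ (hfib _ t),
      fun j tj => ?_⟩
    simp only [interim]
    refine Finset.sum_congr rfl fun tm _ => ?_
    congr 1
    exact integral_comp_fiber ν
      (fun c => play r y (fun i => σ i (combine j tj tm i)) (combine j tj tm) c)
      (hfib _ _) (u j (combine j tj tm))
  · -- INTIR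
    intro j
    have a0 : A j := Classical.arbitrary _
    have tj0 : T j := Classical.arbitrary _
    refine ⟨fun tm b => (ν {c | (fun k : {k : Fin n // k ≠ j} =>
        play r y (combine j (κ j a0) fun m => σ m.1 (tm m)) (combine j tj0 tm) c k.1)
          = b}).toReal,
      fun tm b => ENNReal.toReal_nonneg,
      fun tm => sum_toReal_measure_fiber ν _ (hfib2 j _ _),
      fun tj aj => ?_⟩
    refine le_trans (le_of_eq ?_) (hσ j tj (κ j aj))
    simp only [interim]
    refine Finset.sum_congr rfl fun tm _ => ?_
    congr 1
    have hd : ∀ a : A j,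
        (fun i => Function.update σ j (fun _ => κ j a) i (combine j tj tm i))
          = combine j (κ j a) fun m => σ m.1 (tm m) := by
      intro a
      funext i
      by_cases hij : i = j
      · subst hij
        rw [Function.update_self, combine_same]
      · rw [Function.update_of_ne hij, combine_ne _ _ _ hij, combine_ne _ _ _ hij]
    have hbase : ∀ (k : Fin n) (hjk : j ≠ k) (a : A j),
        (fun l : {l : Fin n // l ≠ k} =>
            (combine j (κ j a) fun m => σ m.1 (tm m) : ∀ i, D i) l.1)
          = Function.update (fun l : {l : Fin n // l ≠ k} =>
              (combine j (κ j a0) fun m => σ m.1 (tm m) : ∀ i, D i) l.1)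
              ⟨j, hjk⟩ (κ j a) := by
      intro k hjk a
      funext l
      rcases eq_or_ne l ⟨j, hjk⟩ with hl | hl
      · subst hl
        rw [Function.update_self]
        exact combine_same j (κ j a) _
      · have hlj : l.1 ≠ j := fun he => hl (Subtype.ext he)
        rw [Function.update_of_ne hl, combine_ne _ _ _ hlj, combine_ne _ _ _ hlj]
    have hθ : ∀ (k : Fin n) (hjk : j ≠ k) (a : A j) (tj' : T j),
        (fun l : {l : Fin n // l ≠ k} =>
          if y l.1 ((combine j (κ j a) fun m => σ m.1 (tm m) : ∀ i, D i) l.1)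
              (combine j tj' tm l.1)
              (fun m => (combine j (κ j a) fun m => σ m.1 (tm m) : ∀ i, D i) m.1)
              ⟨k, Ne.symm l.2⟩
          then some (combine j tj' tm l.1) else none)
        = (fun l : {l : Fin n // l ≠ k} =>
          if y l.1 ((combine j (κ j a0) fun m => σ m.1 (tm m) : ∀ i, D i) l.1)
              (combine j tj0 tm l.1)
              (fun m => (combine j (κ j a0) fun m => σ m.1 (tm m) : ∀ i, D i) m.1)
              ⟨k, Ne.symm l.2⟩
          then some (combine j tj0 tm l.1) else none) := by
      intro k hjk a tj'
      funext l
      rcases eq_or_ne l.1 j with hlj | hlj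
      · obtain ⟨l, hlk⟩ := l
        dsimp only at hlj
        subst hlj
        simp [combine_same, hκy]
      · rw [combine_ne j (κ j a) _ hlj, combine_ne j (κ j a0) _ hlj,
            combine_ne j tj' tm hlj, combine_ne j tj0 tm hlj,
            hbase l.1 (Ne.symm hlj) a,
            hκindist_y j a a0 l.1 (Ne.symm hlj) (σ l.1 (tm ⟨l.1, hlj⟩)) (tm ⟨l.1, hlj⟩)
              _ ⟨k, Ne.symm l.2⟩,
            ← hbase l.1 (Ne.symm hlj) a0]
    have hB : ∀ c, play r y (combine j (κ j aj) fun m => σ m.1 (tm m)) (combine j tj tm) c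
        = combine j aj (fun k : {k : Fin n // k ≠ j} =>
            play r y (combine j (κ j a0) fun m => σ m.1 (tm m)) (combine j tj0 tm) c k.1) := by
      intro c
      funext i
      by_cases hij : i = j
      · subst hij
        rw [combine_same]
        simp only [play, combine_same]
        exact hκr _ aj _ _ _ c
      · rw [combine_ne j aj _ hij]
        simp only [play]
        rw [combine_ne j (κ j aj) _ hij, combine_ne j (κ j a0) _ hij,
            combine_ne j tj tm hij, combine_ne j tj0 tm hij,
            hθ i (Ne.symm hij) aj tj,
            hbase i (Ne.symm hij) aj]
        conv_rhs => rw [hbase i (Ne.symm hij) a0]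
        exact hκindist_r j aj a0 i (Ne.symm hij) _ _ _ _ c
    rw [hd aj]
    simp_rw [hB]
    exact (integral_comp_fiber ν
      (fun c => fun k : {k : Fin n // k ≠ j} =>
        play r y (combine j (κ j a0) fun m => σ m.1 (tm m)) (combine j tj0 tm) c k.1)
      (hfib2 j _ _)
      (fun b => u j (combine j tj tm) (combine j aj b))).symm
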